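/- Assume s ≥ 1, κ ≥ 1, μ ≥ μ_h, 0 < ε ≤ 1/15, and set ξ = ε/(10√(2s)·κ). Suppose ‖𝒜_i*(y) − h_{i0}x_{i0}*‖ ≤ ξ·d_{i0} (operator norm) for every i = 1,…,s. For each i let d_i = ‖𝒜_i*(y)‖ (operator norm); let ĥ_{i0} ∈ ℂ^K, x̂_{i0} ∈ ℂ^N be unit vectors such that ‖𝒜_i*(y) − d_i ĥ_{i0} x̂_{i0}*‖ ≤ ‖𝒜_i*(y) − Z‖ for every Z ∈ ℂ^{K×N} of rank at most one; let u_i^{(0)} ∈ Q_i := {z ∈ ℂ^K : √L‖Bz‖_∞ ≤ 2√d_i·μ} satisfy ‖u_i^{(0)} − √d_i ĥ_{i0}‖ ≤ ‖z − √d_i ĥ_{i0}‖ for all z ∈ Q_i; and set v_i^{(0)} = √d_i·x̂_{i0}. Then for every i: 0.9·d_{i0} ≤ d_i ≤ 1.1·d_{i0}; ‖u_i^{(0)}‖ ≤ (2/√3)√d_{i0}; ‖v_i^{(0)}‖ ≤ (2/√3)√d_{i0}; √L‖Bu_i^{(0)}‖_∞ ≤ (4/√3)√d_{i0}·μ; and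 ‖u_i^{(0)}(v_i^{(0)})* − h_{i0}x_{i0}*‖_F ≤ 5ξ·d_{i0} ≤ (2ε/(5√s·κ))·d_{i0}. -/

import Mathlib

noncomputable section
open Finset ComplexConjugate

namespace RGD

/-- Squared Euclidean norm of a complex vector. -/
def vnormSq {n : ℕ} (v : Fin n → ℂ) : ℝ := ∑ j, ‖v j‖ ^ 2

/-- Euclidean norm of a complex vector. -/
def vnorm {n : ℕ} (v : Fin n → ℂ) : ℝ := Real.sqrt (vnormSq v)

/-- Inner product, conjugate-linear in the first argument. -/
def vinner {n : ℕ} (u v : Fin n → ℂ) : ℂ := ∑ j, conj (u j) * v j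

/-- Squared Frobenius norm of a matrix. -/
def frobSq {K N : ℕ} (Z : Matrix (Fin K) (Fin N) ℂ) : ℝ := ∑ k, ∑ j, ‖Z k j‖ ^ 2

/-- Frobenius norm of a matrix. -/
def frob {K N : ℕ} (Z : Matrix (Fin K) (Fin N) ℂ) : ℝ := Real.sqrt (frobSq Z)

/-- Frobenius inner product `⟨U,V⟩ = Tr(U*V)`, conjugate-linear in the first argument. -/
def finner {K N : ℕ} (U V : Matrix (Fin K) (Fin N) ℂ) : ℂ := ∑ k, ∑ j, conj (U k j) * V k j

/-- Spectral (operator) norm of a matrix: sup of `‖Zv‖` over the closed unit ball. -/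
def opNorm {K N : ℕ} (Z : Matrix (Fin K) (Fin N) ℂ) : ℝ :=
  sSup {r : ℝ | ∃ v : Fin N → ℂ, vnorm v ≤ 1 ∧ r = vnorm (Z.mulVec v)}

/-- Squared Frobenius norm of a block-diagonal matrix, given by its diagonal blocks. -/
def famFrobSq {K N s : ℕ} (Z : Fin s → Matrix (Fin K) (Fin N) ℂ) : ℝ := ∑ i, frobSq (Z i)

/-- Frobenius norm of a block-diagonal matrix, given by its diagonal blocks. -/
def famFrob {K N s : ℕ} (Z : Fin s → Matrix (Fin K) (Fin N) ℂ) : ℝ := Real.sqrt (famFrobSq Z)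

/-- The rank-one matrix `u v*`. -/
def rankOne {K N : ℕ} (u : Fin K → ℂ) (v : Fin N → ℂ) : Matrix (Fin K) (Fin N) ℂ :=
  Matrix.of fun k j => u k * conj (v j)

/-- `ℋ(h,x)`: block-diagonal matrix with `i`-th block `hᵢ xᵢ*`. -/
def Hmap {K N s : ℕ} (h : Fin s → Fin K → ℂ) (x : Fin s → Fin N → ℂ) :
    Fin s → Matrix (Fin K) (Fin N) ℂ := fun i => rankOne (h i) (x i)

/-- `𝒜ᵢ(Z) = (bₗ* Z aₗ)ₗ`. -/
def calAi {K N L : ℕ} (b : Fin L → Fin K → ℂ) (a : Fin L → Fin N → ℂ)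
    (Z : Matrix (Fin K) (Fin N) ℂ) : Fin L → ℂ :=
  fun l => vinner (b l) (Z.mulVec (a l))

/-- `𝒜(Z) = Σᵢ 𝒜ᵢ(Zᵢ)` on block-diagonal matrices. -/
def calA {K N L s : ℕ} (b : Fin L → Fin K → ℂ) (a : Fin s → Fin L → Fin N → ℂ)
    (Z : Fin s → Matrix (Fin K) (Fin N) ℂ) : Fin L → ℂ :=
  fun l => ∑ i, calAi b (a i) (Z i) l

/-- `𝒜ᵢ*(z) = Σₗ zₗ bₗ aₗ*`. -/
def calAdj {K N L : ℕ} (b : Fin L → Fin K → ℂ) (a : Fin L → Fin N → ℂ)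
    (z : Fin L → ℂ) : Matrix (Fin K) (Fin N) ℂ :=
  Matrix.of fun k j => ∑ l, z l * b l k * conj (a l j)

/-- `‖𝒜*(e)‖ = maxᵢ ‖𝒜ᵢ*(e)‖` (operator norms). -/
def AadjNorm {K N L s : ℕ} (b : Fin L → Fin K → ℂ) (a : Fin s → Fin L → Fin N → ℂ)
    (e : Fin L → ℂ) : ℝ :=
  ⨆ i : Fin s, opNorm (calAdj b (a i) e)

/-- `B*B = I_K`, expressed in terms of the columns `bₗ` of `B*`. -/
def BtBeqI {K L : ℕ} (b : Fin L → Fin K → ℂ) : Prop :=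
  ∀ k k' : Fin K, (∑ l, b l k * conj (b l k')) = if k = k' then (1 : ℂ) else 0

/-- `μ ≥ μ_h`, i.e. `√L ‖B h_{i0}‖_∞ ≤ μ ‖h_{i0}‖` for all `i`. -/
def muhLe {K L s : ℕ} (b : Fin L → Fin K → ℂ) (h0 : Fin s → Fin K → ℂ) (μ : ℝ) : Prop :=
  ∀ i l, Real.sqrt L * ‖vinner (b l) (h0 i)‖ ≤ μ * vnorm (h0 i)

/-- `d₀ = √(Σᵢ d_{i0}²)`. -/
def dtot {s : ℕ} (d0 : Fin s → ℝ) : ℝ := Real.sqrt (∑ i, d0 i ^ 2)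

/-- Condition number `κ = (maxᵢ d_{i0}) / (minᵢ d_{i0})`. -/
def kappa {s : ℕ} (d0 : Fin s → ℝ) : ℝ := (⨆ i, d0 i) / (⨅ i, d0 i)

/-- The observation `y = 𝒜(ℋ(h₀,x₀)) + e`. -/
def yvec {K N L s : ℕ} (b : Fin L → Fin K → ℂ) (a : Fin s → Fin L → Fin N → ℂ)
    (h0 : Fin s → Fin K → ℂ) (x0 : Fin s → Fin N → ℂ) (e : Fin L → ℂ) : Fin L → ℂ :=
  fun l => calA b a (Hmap h0 x0) l + e l

/-- `F(h,x) = ‖𝒜(ℋ(h,x)) − y‖²`. -/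
def Fobj {K N L s : ℕ} (b : Fin L → Fin K → ℂ) (a : Fin s → Fin L → Fin N → ℂ)
    (h0 : Fin s → Fin K → ℂ) (x0 : Fin s → Fin N → ℂ) (e : Fin L → ℂ)
    (h : Fin s → Fin K → ℂ) (x : Fin s → Fin N → ℂ) : ℝ :=
  vnormSq (fun l => calA b a (Hmap h x) l - yvec b a h0 x0 e l)

def G0 (z : ℝ) : ℝ := max (z - 1) 0 ^ 2

def G0' (z : ℝ) : ℝ := 2 * max (z - 1) 0

/-- The `i`-th regularizer `Gᵢ(hᵢ,xᵢ)` (including the factor `ρ`). -/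
def Gi {K N L : ℕ} (b : Fin L → Fin K → ℂ) (ρ μ di : ℝ)
    (hi : Fin K → ℂ) (xi : Fin N → ℂ) : ℝ :=
  ρ * (G0 (vnormSq hi / (2 * di)) + G0 (vnormSq xi / (2 * di))
    + ∑ l, G0 ((L : ℝ) * ‖vinner (b l) hi‖ ^ 2 / (8 * di * μ ^ 2)))

/-- The regularizer `G(h,x) = Σᵢ Gᵢ(hᵢ,xᵢ)`. -/
def Greg {K N L s : ℕ} (b : Fin L → Fin K → ℂ) (ρ μ : ℝ) (dd : Fin s → ℝ)
    (h : Fin s → Fin K → ℂ) (x : Fin s → Fin N → ℂ) : ℝ :=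
  ∑ i, Gi b ρ μ (dd i) (h i) (x i)

/-- `F̃ = F + G`. -/
def Ftil {K N L s : ℕ} (b : Fin L → Fin K → ℂ) (a : Fin s → Fin L → Fin N → ℂ)
    (h0 : Fin s → Fin K → ℂ) (x0 : Fin s → Fin N → ℂ) (e : Fin L → ℂ)
    (ρ μ : ℝ) (dd : Fin s → ℝ)
    (h : Fin s → Fin K → ℂ) (x : Fin s → Fin N → ℂ) : ℝ :=
  Fobj b a h0 x0 e h x + Greg b ρ μ dd h x

/-- The residual `𝒜(ℋ(h,x)) − y`. -/
def residual {K N L s : ℕ} (b : Fin L → Fin K → ℂ) (a : Fin s → Fin L → Fin N → ℂ)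
    (h0 : Fin s → Fin K → ℂ) (x0 : Fin s → Fin N → ℂ) (e : Fin L → ℂ)
    (h : Fin s → Fin K → ℂ) (x : Fin s → Fin N → ℂ) : Fin L → ℂ :=
  fun l => calA b a (Hmap h x) l - yvec b a h0 x0 e l

/-- Wirtinger gradient `∇F_{hᵢ} = 𝒜ᵢ*(𝒜(ℋ(h,x)) − y) xᵢ`. -/
def gradFh {K N L s : ℕ} (b : Fin L → Fin K → ℂ) (a : Fin s → Fin L → Fin N → ℂ)
    (h0 : Fin s → Fin K → ℂ) (x0 : Fin s → Fin N → ℂ) (e : Fin L → ℂ)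
    (h : Fin s → Fin K → ℂ) (x : Fin s → Fin N → ℂ) (i : Fin s) : Fin K → ℂ :=
  (calAdj b (a i) (residual b a h0 x0 e h x)).mulVec (x i)

/-- Wirtinger gradient `∇F_{xᵢ} = (𝒜ᵢ*(𝒜(ℋ(h,x)) − y))* hᵢ`. -/
def gradFx {K N L s : ℕ} (b : Fin L → Fin K → ℂ) (a : Fin s → Fin L → Fin N → ℂ)
    (h0 : Fin s → Fin K → ℂ) (x0 : Fin s → Fin N → ℂ) (e : Fin L → ℂ)
    (h : Fin s → Fin K → ℂ) (x : Fin s → Fin N → ℂ) (i : Fin s) : Fin N → ℂ :=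
  (calAdj b (a i) (residual b a h0 x0 e h x)).conjTranspose.mulVec (h i)

/-- Wirtinger gradient `∇G_{hᵢ}`. -/
def gradGh {K L s : ℕ} (b : Fin L → Fin K → ℂ) (ρ μ : ℝ) (dd : Fin s → ℝ)
    (h : Fin s → Fin K → ℂ) (i : Fin s) : Fin K → ℂ :=
  fun k => ((ρ / (2 * dd i) : ℝ) : ℂ) *
    (((G0' (vnormSq (h i) / (2 * dd i)) : ℝ) : ℂ) * h i k
      + (((L : ℝ) / (4 * μ ^ 2) : ℝ) : ℂ) *
        ∑ l, ((G0' ((L : ℝ) * ‖vinner (b l) (h i)‖ ^ 2 / (8 * dd i * μ ^ 2)) : ℝ) : ℂ)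
          * (vinner (b l) (h i) * b l k))

/-- Wirtinger gradient `∇G_{xᵢ}`. -/
def gradGx {N s : ℕ} (ρ : ℝ) (dd : Fin s → ℝ)
    (x : Fin s → Fin N → ℂ) (i : Fin s) : Fin N → ℂ :=
  fun j => ((ρ / (2 * dd i) : ℝ) : ℂ) * (((G0' (vnormSq (x i) / (2 * dd i)) : ℝ) : ℂ) * x i j)

/-- `∇F̃_{hᵢ} = ∇F_{hᵢ} + ∇G_{hᵢ}`. -/
def gradH {K N L s : ℕ} (b : Fin L → Fin K → ℂ) (a : Fin s → Fin L → Fin N → ℂ)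
    (h0 : Fin s → Fin K → ℂ) (x0 : Fin s → Fin N → ℂ) (e : Fin L → ℂ)
    (ρ μ : ℝ) (dd : Fin s → ℝ)
    (h : Fin s → Fin K → ℂ) (x : Fin s → Fin N → ℂ) (i : Fin s) : Fin K → ℂ :=
  fun k => gradFh b a h0 x0 e h x i k + gradGh b ρ μ dd h i k

/-- `∇F̃_{xᵢ} = ∇F_{xᵢ} + ∇G_{xᵢ}`. -/
def gradX {K N L s : ℕ} (b : Fin L → Fin K → ℂ) (a : Fin s → Fin L → Fin N → ℂ)
    (h0 : Fin s → Fin K → ℂ) (x0 : Fin s → Fin N → ℂ) (e : Fin L → ℂ)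
    (ρ μ : ℝ) (dd : Fin s → ℝ)
    (h : Fin s → Fin K → ℂ) (x : Fin s → Fin N → ℂ) (i : Fin s) : Fin N → ℂ :=
  fun j => gradFx b a h0 x0 e h x i j + gradGx ρ dd x i j

/-- `‖∇F̃(h,x)‖²` (squared norm of the stacked Wirtinger gradient). -/
def gradNormSq {K N L s : ℕ} (b : Fin L → Fin K → ℂ) (a : Fin s → Fin L → Fin N → ℂ)
    (h0 : Fin s → Fin K → ℂ) (x0 : Fin s → Fin N → ℂ) (e : Fin L → ℂ)
    (ρ μ : ℝ) (dd : Fin s → ℝ)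
    (h : Fin s → Fin K → ℂ) (x : Fin s → Fin N → ℂ) : ℝ :=
  ∑ i, vnormSq (gradH b a h0 x0 e ρ μ dd h x i) + ∑ i, vnormSq (gradX b a h0 x0 e ρ μ dd h x i)

/-- `‖∇F̃(h',x') − ∇F̃(h,x)‖²`. -/
def gradDiffNormSq {K N L s : ℕ} (b : Fin L → Fin K → ℂ) (a : Fin s → Fin L → Fin N → ℂ)
    (h0 : Fin s → Fin K → ℂ) (x0 : Fin s → Fin N → ℂ) (e : Fin L → ℂ)
    (ρ μ : ℝ) (dd : Fin s → ℝ)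
    (h : Fin s → Fin K → ℂ) (x : Fin s → Fin N → ℂ)
    (h' : Fin s → Fin K → ℂ) (x' : Fin s → Fin N → ℂ) : ℝ :=
  ∑ i, vnormSq (fun k => gradH b a h0 x0 e ρ μ dd h' x' i k - gradH b a h0 x0 e ρ μ dd h x i k)
  + ∑ i, vnormSq (fun j => gradX b a h0 x0 e ρ μ dd h' x' i j - gradX b a h0 x0 e ρ μ dd h x i j)

/-- Membership in `𝒩_d`. -/
def inNd {K N s : ℕ} (d0 : Fin s → ℝ)
    (h : Fin s → Fin K → ℂ) (x : Fin s → Fin N → ℂ) : Prop :=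
  ∀ i, vnorm (h i) ≤ 2 * Real.sqrt (d0 i) ∧ vnorm (x i) ≤ 2 * Real.sqrt (d0 i)

/-- Membership in `𝒩_μ`. -/
def inNmu {K L s : ℕ} (b : Fin L → Fin K → ℂ) (d0 : Fin s → ℝ) (μ : ℝ)
    (h : Fin s → Fin K → ℂ) : Prop :=
  ∀ i, ∀ l, Real.sqrt L * ‖vinner (b l) (h i)‖ ≤ 4 * Real.sqrt (d0 i) * μ

/-- `δᵢ(hᵢ,xᵢ) = ‖hᵢxᵢ* − h_{i0}x_{i0}*‖_F / d_{i0}`. -/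
def deltaI {K N : ℕ} (h0i : Fin K → ℂ) (x0i : Fin N → ℂ) (d0i : ℝ)
    (hi : Fin K → ℂ) (xi : Fin N → ℂ) : ℝ :=
  frob (rankOne hi xi - rankOne h0i x0i) / d0i

/-- Membership in `𝒩_ε`. -/
def inNeps {K N s : ℕ} (h0 : Fin s → Fin K → ℂ) (x0 : Fin s → Fin N → ℂ)
    (d0 : Fin s → ℝ) (ε : ℝ)
    (h : Fin s → Fin K → ℂ) (x : Fin s → Fin N → ℂ) : Prop :=
  ∀ i, deltaI (h0 i) (x0 i) (d0 i) (h i) (x i) ≤ ε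

/-- The global relative error `δ(h,x) = ‖ℋ(h,x) − X₀‖_F / d₀`. -/
def deltaTot {K N s : ℕ} (h0 : Fin s → Fin K → ℂ) (x0 : Fin s → Fin N → ℂ)
    (d0 : Fin s → ℝ)
    (h : Fin s → Fin K → ℂ) (x : Fin s → Fin N → ℂ) : ℝ :=
  famFrob (fun i => Hmap h x i - Hmap h0 x0 i) / dtot d0

/-- Membership in `𝒩_F̃`. -/
def inNF {K N L s : ℕ} (b : Fin L → Fin K → ℂ) (a : Fin s → Fin L → Fin N → ℂ)
    (h0 : Fin s → Fin K → ℂ) (x0 : Fin s → Fin N → ℂ) (e : Fin L → ℂ)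
    (d0 : Fin s → ℝ) (ρ μ : ℝ) (dd : Fin s → ℝ) (ε : ℝ)
    (h : Fin s → Fin K → ℂ) (x : Fin s → Fin N → ℂ) : Prop :=
  Ftil b a h0 x0 e ρ μ dd h x ≤ ε ^ 2 * dtot d0 ^ 2 / (3 * (s : ℝ) * kappa d0 ^ 2) + vnormSq e

/-- The Local Restricted Isometry Property on `𝒩_d ∩ 𝒩_μ ∩ 𝒩_ε`. -/
def LocalRIP {K N L s : ℕ} (b : Fin L → Fin K → ℂ) (a : Fin s → Fin L → Fin N → ℂ)
    (h0 : Fin s → Fin K → ℂ) (x0 : Fin s → Fin N → ℂ)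
    (d0 : Fin s → ℝ) (μ ε : ℝ) : Prop :=
  ∀ (h : Fin s → Fin K → ℂ) (x : Fin s → Fin N → ℂ),
    inNd d0 h x → inNmu b d0 μ h → inNeps h0 x0 d0 ε h x →
      (2 / 3) * famFrobSq (fun i => Hmap h x i - Hmap h0 x0 i)
          ≤ vnormSq (calA b a fun i => Hmap h x i - Hmap h0 x0 i)
      ∧ vnormSq (calA b a fun i => Hmap h x i - Hmap h0 x0 i)
          ≤ (3 / 2) * famFrobSq (fun i => Hmap h x i - Hmap h0 x0 i)

/-- `α_{i1} = ⟨h_{i0}, hᵢ⟩ / d_{i0}`. -/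
def alpha1 {K s : ℕ} (h0 : Fin s → Fin K → ℂ) (d0 : Fin s → ℝ)
    (h : Fin s → Fin K → ℂ) (i : Fin s) : ℂ :=
  vinner (h0 i) (h i) / ((d0 i : ℝ) : ℂ)

/-- `α_{i2} = ⟨x_{i0}, xᵢ⟩ / d_{i0}`. -/
def alpha2 {N s : ℕ} (x0 : Fin s → Fin N → ℂ) (d0 : Fin s → ℝ)
    (x : Fin s → Fin N → ℂ) (i : Fin s) : ℂ :=
  vinner (x0 i) (x i) / ((d0 i : ℝ) : ℂ)

/-- `δ₀ = δ/10`. -/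
def delta0 {K N s : ℕ} (h0 : Fin s → Fin K → ℂ) (x0 : Fin s → Fin N → ℂ)
    (d0 : Fin s → ℝ) (h : Fin s → Fin K → ℂ) (x : Fin s → Fin N → ℂ) : ℝ :=
  deltaTot h0 x0 d0 h x / 10

/-- `αᵢ = (1−δ₀)α_{i1}` if `‖hᵢ‖ ≥ ‖xᵢ‖`, else `1/((1−δ₀) conj(α_{i2}))`. -/
def alphaC {K N s : ℕ} (h0 : Fin s → Fin K → ℂ) (x0 : Fin s → Fin N → ℂ)
    (d0 : Fin s → ℝ) (h : Fin s → Fin K → ℂ) (x : Fin s → Fin N → ℂ) (i : Fin s) : ℂ :=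
  if vnorm (x i) ≤ vnorm (h i)
  then ((1 - delta0 h0 x0 d0 h x : ℝ) : ℂ) * alpha1 h0 d0 h i
  else 1 / (((1 - delta0 h0 x0 d0 h x : ℝ) : ℂ) * conj (alpha2 x0 d0 x i))

/-- `Δhᵢ = hᵢ − αᵢ h_{i0}`. -/
def dh {K N s : ℕ} (h0 : Fin s → Fin K → ℂ) (x0 : Fin s → Fin N → ℂ)
    (d0 : Fin s → ℝ) (h : Fin s → Fin K → ℂ) (x : Fin s → Fin N → ℂ) (i : Fin s) :
    Fin K → ℂ :=
  fun k => h i k - alphaC h0 x0 d0 h x i * h0 i k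

/-- `Δxᵢ = xᵢ − conj(αᵢ)⁻¹ x_{i0}`. -/
def dx {K N s : ℕ} (h0 : Fin s → Fin K → ℂ) (x0 : Fin s → Fin N → ℂ)
    (d0 : Fin s → ℝ) (h : Fin s → Fin K → ℂ) (x : Fin s → Fin N → ℂ) (i : Fin s) :
    Fin N → ℂ :=
  fun j => x i j - (conj (alphaC h0 x0 d0 h x i))⁻¹ * x0 i j

/-- `σ²_max(h,x) = maxₗ Σᵢ |bₗ*hᵢ|² ‖xᵢ‖²`. -/
def sigmaMaxSq {K N L s : ℕ} (b : Fin L → Fin K → ℂ)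
    (h : Fin s → Fin K → ℂ) (x : Fin s → Fin N → ℂ) : ℝ :=
  ⨆ l : Fin L, ∑ i, ‖vinner (b l) (h i)‖ ^ 2 * vnormSq (x i)

/-- The rank-one bound (Lemma: `𝒜` on block-diagonal matrices with rank-1 blocks). -/
def RankOneBound {K N L s : ℕ} (b : Fin L → Fin K → ℂ)
    (a : Fin s → Fin L → Fin N → ℂ) : Prop :=
  ∀ (h : Fin s → Fin K → ℂ) (x : Fin s → Fin N → ℂ),
    vnormSq (calA b a (Hmap h x)) ≤
      4 / 3 * famFrobSq (Hmap h x)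
      + 2 * Real.sqrt (2 * (s : ℝ) * famFrobSq (Hmap h x) * sigmaMaxSq b h x
          * ((K : ℝ) + N) * Real.log L)
      + 8 * (s : ℝ) * sigmaMaxSq b h x * ((K : ℝ) + N) * Real.log L

/-- The subspace `Tᵢ = {h_{i0} v* + u x_{i0}*}`. -/
def Tspace {K N : ℕ} (h0i : Fin K → ℂ) (x0i : Fin N → ℂ) :
    Set (Matrix (Fin K) (Fin N) ℂ) :=
  {Z | ∃ (u : Fin K → ℂ) (v : Fin N → ℂ), Z = rankOne h0i v + rankOne u x0i}

/-- `P` is the orthogonal projection onto `Tᵢ` w.r.t. the Frobenius inner product. -/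
def IsFrobProj {K N : ℕ} (h0i : Fin K → ℂ) (x0i : Fin N → ℂ)
    (P : Matrix (Fin K) (Fin N) ℂ → Matrix (Fin K) (Fin N) ℂ) : Prop :=
  ∀ Z, P Z ∈ Tspace h0i x0i ∧ ∀ W ∈ Tspace h0i x0i, finner W (Z - P Z) = 0

/-- Operator norm of `𝒜ᵢ` from `(ℂ^{K×N}, ‖·‖_F)` to `(ℂ^L, ‖·‖)`. -/
def calAiOpNorm {K N L : ℕ} (b : Fin L → Fin K → ℂ) (a : Fin L → Fin N → ℂ) : ℝ :=
  sSup {r : ℝ | ∃ Z : Matrix (Fin K) (Fin N) ℂ, frob Z ≤ 1 ∧ r = vnorm (calAi b a Z)}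

/-- Operator norm of `𝒜` from block-diagonal matrices with `‖·‖_F` to `ℂ^L`. -/
def calAOpNorm {K N L s : ℕ} (b : Fin L → Fin K → ℂ)
    (a : Fin s → Fin L → Fin N → ℂ) : ℝ :=
  sSup {r : ℝ | ∃ Z : Fin s → Matrix (Fin K) (Fin N) ℂ, famFrob Z ≤ 1 ∧ r = vnorm (calA b a Z)}

/-- Norm of a stacked vector in `ℂ^{ns}`. -/
def stackNorm {n s : ℕ} (u : Fin s → Fin n → ℂ) : ℝ := Real.sqrt (∑ i, vnormSq (u i))

/-- Norm of a point `z = (h,x) ∈ ℂ^{s(K+N)}`. -/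
def pairNorm {K N s : ℕ} (u : Fin s → Fin K → ℂ) (v : Fin s → Fin N → ℂ) : ℝ :=
  Real.sqrt (∑ i, vnormSq (u i) + ∑ i, vnormSq (v i))

/-- `z + t • w` componentwise, `t` real. -/
def shiftV {n s : ℕ} (u w : Fin s → Fin n → ℂ) (t : ℝ) : Fin s → Fin n → ℂ :=
  fun i k => u i k + (t : ℂ) * w i k

/-- `σ_max(h) = maxₗ √(Σᵢ |bₗ*hᵢ|²)` (unit `xᵢ`'s). -/
def sigmaMaxU {K L s : ℕ} (b : Fin L → Fin K → ℂ) (h : Fin s → Fin K → ℂ) : ℝ :=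
  ⨆ l, Real.sqrt (∑ i, ‖vinner (b l) (h i)‖ ^ 2)

/-! ### vector lemmas -/

def toE {n : ℕ} (v : Fin n → ℂ) : EuclideanSpace ℂ (Fin n) := (WithLp.equiv 2 _).symm v

lemma vnorm_eq {n : ℕ} (v : Fin n → ℂ) : vnorm v = ‖toE v‖ := by
  rw [EuclideanSpace.norm_eq]; rfl

lemma vinner_eq {n : ℕ} (u v : Fin n → ℂ) : vinner u v = inner (𝕜 := ℂ) (toE u) (toE v) := by
  simp [PiLp.inner_apply, RCLike.inner_apply, toE, vinner]
  exact Finset.sum_congr rfl fun j _ => mul_comm _ _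

lemma vnormSq_nonneg {n : ℕ} (v : Fin n → ℂ) : 0 ≤ vnormSq v :=
  Finset.sum_nonneg fun _ _ => sq_nonneg _

lemma vnorm_nonneg {n : ℕ} (v : Fin n → ℂ) : 0 ≤ vnorm v := Real.sqrt_nonneg _

lemma vnorm_sq {n : ℕ} (v : Fin n → ℂ) : vnorm v ^ 2 = vnormSq v :=
  Real.sq_sqrt (vnormSq_nonneg v)

lemma vnormSq_eq {n : ℕ} (v : Fin n → ℂ) : vnormSq v = ‖toE v‖ ^ 2 := by
  rw [← vnorm_sq, vnorm_eq]

lemma vnorm_add_le {n : ℕ} (u v : Fin n → ℂ) :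
    vnorm (fun k => u k + v k) ≤ vnorm u + vnorm v := by
  rw [vnorm_eq, vnorm_eq, vnorm_eq]
  exact norm_add_le (toE u) (toE v)

lemma vinner_norm_le {n : ℕ} (u v : Fin n → ℂ) : ‖vinner u v‖ ≤ vnorm u * vnorm v := by
  rw [vinner_eq, vnorm_eq, vnorm_eq]; exact norm_inner_le_norm _ _

lemma vnormSq_add {n : ℕ} (u v : Fin n → ℂ) :
    vnormSq (fun k => u k + v k) = vnormSq u + vnormSq v + 2 * (vinner u v).re := by
  have h : toE (fun k => u k + v k) = toE u + toE v := rfl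
  rw [vnormSq_eq, vnormSq_eq, vnormSq_eq, h, norm_add_sq (𝕜 := ℂ)]
  rw [show RCLike.re (inner (𝕜 := ℂ) (toE u) (toE v)) = (vinner u v).re by
    rw [vinner_eq]; rfl]
  ring

lemma vnormSq_sub {n : ℕ} (u v : Fin n → ℂ) :
    vnormSq (fun k => u k - v k) = vnormSq u + vnormSq v - 2 * (vinner u v).re := by
  have h := vnormSq_add u (fun k => - v k)
  have h1 : vnormSq (fun k => - v k) = vnormSq v := by
    simp [vnormSq]
  have h2 : vinner u (fun k => - v k) = - vinner u v := by
    simp [vinner]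
  simp only [h1, h2] at h
  calc vnormSq (fun k => u k - v k) = vnormSq (fun k => u k + (- v k)) := by
        simp [sub_eq_add_neg]
    _ = vnormSq u + vnormSq v - 2 * (vinner u v).re := by rw [h]; simp; ring

lemma vnorm_smul {n : ℕ} (t : ℂ) (v : Fin n → ℂ) :
    vnorm (fun k => t * v k) = ‖t‖ * vnorm v := by
  have : vnormSq (fun k => t * v k) = ‖t‖^2 * vnormSq v := by
    simp [vnormSq, Finset.mul_sum, mul_pow]
  rw [vnorm, this, Real.sqrt_mul (sq_nonneg _), Real.sqrt_sq (norm_nonneg t)]; rfl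

lemma vinner_self {n : ℕ} (v : Fin n → ℂ) : vinner v v = (vnormSq v : ℂ) := by
  simp only [vinner, vnormSq]
  push_cast
  refine Finset.sum_congr rfl fun j _ => ?_
  rw [mul_comm, Complex.mul_conj']

lemma vnorm_eq_zero {n : ℕ} (v : Fin n → ℂ) (h : vnorm v = 0) : ∀ k, v k = 0 := by
  intro k
  have : vnormSq v = 0 := by
    have := vnorm_sq v; rw [h] at this; simpa using this.symm
  have hk := (Finset.sum_eq_zero_iff_of_nonneg (fun j _ => sq_nonneg ‖v j‖)).1 this k (Finset.mem_univ k)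
  simpa using hk

lemma vinner_smul_right {n : ℕ} (t : ℂ) (u v : Fin n → ℂ) :
    vinner u (fun k => t * v k) = t * vinner u v := by
  rw [vinner, vinner, Finset.mul_sum]
  exact Finset.sum_congr rfl fun j _ => by ring

lemma vinner_sub_right {n : ℕ} (u v w : Fin n → ℂ) :
    vinner u (fun k => v k - w k) = vinner u v - vinner u w := by
  simp [vinner, mul_sub, Finset.sum_sub_distrib]

/-! ### matrix lemmas -/

def toM {K N : ℕ} (Z : Matrix (Fin K) (Fin N) ℂ) : EuclideanSpace ℂ (Fin K × Fin N) :=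
  (WithLp.equiv 2 _).symm (fun p => Z p.1 p.2)

lemma frobSq_nonneg {K N : ℕ} (Z : Matrix (Fin K) (Fin N) ℂ) : 0 ≤ frobSq Z :=
  Finset.sum_nonneg fun _ _ => Finset.sum_nonneg fun _ _ => sq_nonneg _

lemma frob_eq {K N : ℕ} (Z : Matrix (Fin K) (Fin N) ℂ) : frob Z = ‖toM Z‖ := by
  rw [EuclideanSpace.norm_eq, Fintype.sum_prod_type]; rfl

lemma frob_sq {K N : ℕ} (Z : Matrix (Fin K) (Fin N) ℂ) : frob Z ^ 2 = frobSq Z :=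
  Real.sq_sqrt (frobSq_nonneg Z)

lemma frobSq_eq {K N : ℕ} (Z : Matrix (Fin K) (Fin N) ℂ) : frobSq Z = ‖toM Z‖ ^ 2 := by
  rw [← frob_sq, frob_eq]

lemma finner_eq {K N : ℕ} (U V : Matrix (Fin K) (Fin N) ℂ) :
    finner U V = inner (𝕜 := ℂ) (toM U) (toM V) := by
  simp only [PiLp.inner_apply, RCLike.inner_apply, toM, finner]
  rw [Fintype.sum_prod_type]
  exact Finset.sum_congr rfl fun k _ => Finset.sum_congr rfl fun j _ => mul_comm _ _

lemma frob_sub_add {K N : ℕ} (A B C : Matrix (Fin K) (Fin N) ℂ) :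
    frob (A - C) ≤ frob (A - B) + frob (B - C) := by
  rw [frob_eq, frob_eq, frob_eq]
  have h1 : toM (A - C) = toM A - toM C := rfl
  have h2 : toM (A - B) = toM A - toM B := rfl
  have h3 : toM (B - C) = toM B - toM C := rfl
  rw [h1, h2, h3]
  exact norm_sub_le_norm_sub_add_norm_sub _ _ _

lemma frobSq_add_of_orth {K N : ℕ} (A B : Matrix (Fin K) (Fin N) ℂ)
    (h : finner A B = 0) : frobSq (A + B) = frobSq A + frobSq B := by
  rw [frobSq_eq, frobSq_eq, frobSq_eq]
  have hAB : toM (A + B) = toM A + toM B := rfl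
  rw [hAB, norm_add_sq (𝕜 := ℂ)]
  rw [show RCLike.re (inner (𝕜 := ℂ) (toM A) (toM B)) = (finner A B).re by
    rw [finner_eq]; rfl]
  rw [h]; simp

lemma frobSq_rankOne {K N : ℕ} (u : Fin K → ℂ) (v : Fin N → ℂ) :
    frobSq (rankOne u v) = vnormSq u * vnormSq v := by
  simp only [frobSq, rankOne, Matrix.of_apply, vnormSq]
  rw [Finset.sum_mul_sum]
  refine Finset.sum_congr rfl fun k _ => Finset.sum_congr rfl fun j _ => ?_
  rw [norm_mul, mul_pow]
  simp

lemma frob_rankOne {K N : ℕ} (u : Fin K → ℂ) (v : Fin N → ℂ) :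
    frob (rankOne u v) = vnorm u * vnorm v := by
  rw [frob, frobSq_rankOne, Real.sqrt_mul (vnormSq_nonneg u)]; rfl

lemma finner_rankOne {K N : ℕ} (u u' : Fin K → ℂ) (v v' : Fin N → ℂ) :
    finner (rankOne u v) (rankOne u' v') = vinner u u' * conj (vinner v v') := by
  simp only [finner, rankOne, Matrix.of_apply, vinner, map_sum, map_mul,
    Complex.conj_conj]
  rw [Finset.sum_mul_sum]
  refine Finset.sum_congr rfl fun k _ => Finset.sum_congr rfl fun j _ => by ring

lemma vnorm_zero {n : ℕ} : vnorm (fun _ : Fin n => (0:ℂ)) = 0 := by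
  simp [vnorm, vnormSq]

lemma mulVec_vnorm_le_frob {K N : ℕ} (Z : Matrix (Fin K) (Fin N) ℂ) (v : Fin N → ℂ) :
    vnorm (Z.mulVec v) ≤ frob Z * vnorm v := by
  have hk : ∀ k, ‖Z.mulVec v k‖^2 ≤ (∑ j, ‖Z k j‖^2) * vnormSq v := by
    intro k
    have h1 : Z.mulVec v k = vinner (fun j => conj (Z k j)) v := by
      simp [Matrix.mulVec, dotProduct, vinner]
    have h2 : ‖Z.mulVec v k‖ ≤ vnorm (fun j => conj (Z k j)) * vnorm v := by
      rw [h1]; exact vinner_norm_le _ _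
    have h3 : vnorm (fun j => conj (Z k j)) ^ 2 = ∑ j, ‖Z k j‖^2 := by
      rw [vnorm_sq]; simp [vnormSq]
    calc ‖Z.mulVec v k‖^2 ≤ (vnorm (fun j => conj (Z k j)) * vnorm v)^2 :=
          pow_le_pow_left₀ (norm_nonneg _) h2 2
      _ = _ := by rw [mul_pow, h3, vnorm_sq]
  have hsum : vnormSq (Z.mulVec v) ≤ frobSq Z * vnormSq v := by
    rw [vnormSq, frobSq, Finset.sum_mul]
    exact Finset.sum_le_sum fun k _ => hk k
  calc vnorm (Z.mulVec v) ≤ Real.sqrt (frobSq Z * vnormSq v) := Real.sqrt_le_sqrt hsum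
    _ = frob Z * vnorm v := by rw [Real.sqrt_mul (frobSq_nonneg Z)]; rfl

lemma opNorm_bddAbove {K N : ℕ} (Z : Matrix (Fin K) (Fin N) ℂ) :
    BddAbove {r : ℝ | ∃ v : Fin N → ℂ, vnorm v ≤ 1 ∧ r = vnorm (Z.mulVec v)} := by
  refine ⟨frob Z, ?_⟩
  rintro r ⟨v, hv, rfl⟩
  calc vnorm (Z.mulVec v) ≤ frob Z * vnorm v := mulVec_vnorm_le_frob Z v
    _ ≤ frob Z * 1 := mul_le_mul_of_nonneg_left hv (Real.sqrt_nonneg _)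
    _ = frob Z := mul_one _

lemma opNorm_mem_zero {K N : ℕ} (Z : Matrix (Fin K) (Fin N) ℂ) :
    (0:ℝ) ∈ {r : ℝ | ∃ v : Fin N → ℂ, vnorm v ≤ 1 ∧ r = vnorm (Z.mulVec v)} := by
  refine ⟨fun _ => 0, by simp [vnorm_zero], ?_⟩
  have : Z.mulVec (fun _ => 0) = fun _ => 0 := by
    funext k; simp [Matrix.mulVec, dotProduct]
  rw [this, vnorm_zero]

lemma opNorm_nonneg {K N : ℕ} (Z : Matrix (Fin K) (Fin N) ℂ) : 0 ≤ opNorm Z :=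
  le_csSup (opNorm_bddAbove Z) (opNorm_mem_zero Z)

lemma vnorm_mulVec_le_opNorm {K N : ℕ} (Z : Matrix (Fin K) (Fin N) ℂ) (v : Fin N → ℂ)
    (hv : vnorm v ≤ 1) : vnorm (Z.mulVec v) ≤ opNorm Z :=
  le_csSup (opNorm_bddAbove Z) ⟨v, hv, rfl⟩

lemma vnorm_mulVec_le {K N : ℕ} (Z : Matrix (Fin K) (Fin N) ℂ) (v : Fin N → ℂ) :
    vnorm (Z.mulVec v) ≤ opNorm Z * vnorm v := by
  rcases eq_or_lt_of_le (vnorm_nonneg v) with h0 | h0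
  · have hz : ∀ j, v j = 0 := vnorm_eq_zero v h0.symm
    have hv0 : v = fun _ => 0 := funext hz
    rw [hv0]
    have : Z.mulVec (fun _ => 0) = fun _ => 0 := by
      funext k; simp [Matrix.mulVec, dotProduct]
    rw [this, vnorm_zero, vnorm_zero, mul_zero]
  · set t : ℝ := (vnorm v)⁻¹ with ht
    have htpos : 0 < t := inv_pos.2 h0
    have hu1 : vnorm (fun k => ((t:ℝ):ℂ) * v k) = 1 := by
      rw [vnorm_smul]
      simp only [Complex.norm_real, Real.norm_eq_abs, abs_of_pos htpos, ht]
      field_simp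
      rw [abs_of_pos (one_div_pos.2 h0), mul_one_div_cancel h0.ne']
    have hmem := vnorm_mulVec_le_opNorm Z (fun k => ((t:ℝ):ℂ) * v k) (le_of_eq hu1)
    have hZu : Z.mulVec (fun k => ((t:ℝ):ℂ) * v k) = fun k => ((t:ℝ):ℂ) * Z.mulVec v k := by
      funext k
      simp only [Matrix.mulVec, dotProduct, Finset.mul_sum]
      refine Finset.sum_congr rfl fun j _ => by ring
    rw [hZu, vnorm_smul] at hmem
    simp only [Complex.norm_real, Real.norm_eq_abs, abs_of_pos htpos] at hmem
    have hX : vnorm (Z.mulVec v) = vnorm v * (t * vnorm (Z.mulVec v)) := by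
      rw [ht]; field_simp
    rw [hX]
    calc vnorm v * (t * vnorm (Z.mulVec v)) ≤ vnorm v * opNorm Z :=
          mul_le_mul_of_nonneg_left hmem (le_of_lt h0)
      _ = opNorm Z * vnorm v := mul_comm _ _

lemma opNorm_le {K N : ℕ} (Z : Matrix (Fin K) (Fin N) ℂ) (C : ℝ)
    (h : ∀ v : Fin N → ℂ, vnorm v ≤ 1 → vnorm (Z.mulVec v) ≤ C) : opNorm Z ≤ C := by
  refine csSup_le ⟨0, opNorm_mem_zero Z⟩ ?_
  rintro r ⟨v, hv, rfl⟩
  exact h v hv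

lemma vnorm_neg {n : ℕ} (v : Fin n → ℂ) : vnorm (fun k => - v k) = vnorm v := by
  simp [vnorm, vnormSq]

lemma opNorm_add_le {K N : ℕ} (X Y : Matrix (Fin K) (Fin N) ℂ) :
    opNorm (X + Y) ≤ opNorm X + opNorm Y := by
  refine opNorm_le _ _ fun v hv => ?_
  have h1 : (X + Y).mulVec v = fun k => X.mulVec v k + Y.mulVec v k := by
    funext k; rw [Matrix.add_mulVec]; rfl
  rw [h1]
  calc vnorm (fun k => X.mulVec v k + Y.mulVec v k)
      ≤ vnorm (X.mulVec v) + vnorm (Y.mulVec v) := vnorm_add_le _ _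
    _ ≤ opNorm X + opNorm Y :=
        add_le_add (vnorm_mulVec_le_opNorm X v hv) (vnorm_mulVec_le_opNorm Y v hv)

lemma opNorm_neg {K N : ℕ} (Z : Matrix (Fin K) (Fin N) ℂ) : opNorm (-Z) = opNorm Z := by
  unfold opNorm
  congr 1
  ext r
  have key : ∀ W : Matrix (Fin K) (Fin N) ℂ, ∀ v, vnorm ((-W).mulVec v) = vnorm (W.mulVec v) := by
    intro W v
    rw [Matrix.neg_mulVec]
    exact vnorm_neg _
  constructor
  · rintro ⟨v, hv, rfl⟩; exact ⟨v, hv, (key Z v)⟩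
  · rintro ⟨v, hv, rfl⟩; exact ⟨v, hv, (key Z v).symm⟩

lemma opNorm_sub_le {K N : ℕ} (X Y : Matrix (Fin K) (Fin N) ℂ) :
    opNorm (X - Y) ≤ opNorm X + opNorm Y := by
  rw [sub_eq_add_neg]
  calc opNorm (X + -Y) ≤ opNorm X + opNorm (-Y) := opNorm_add_le X (-Y)
    _ = opNorm X + opNorm Y := by rw [opNorm_neg]

lemma rankOne_mulVec {K N : ℕ} (u : Fin K → ℂ) (v : Fin N → ℂ) (z : Fin N → ℂ) :
    (rankOne u v).mulVec z = fun k => vinner v z * u k := by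
  funext k
  simp only [rankOne, Matrix.mulVec, dotProduct, Matrix.of_apply, vinner,
    Finset.sum_mul]
  refine Finset.sum_congr rfl fun j _ => by ring

lemma opNorm_rankOne {K N : ℕ} (u : Fin K → ℂ) (v : Fin N → ℂ) :
    opNorm (rankOne u v) = vnorm u * vnorm v := by
  refine le_antisymm ?_ ?_
  · refine opNorm_le _ _ fun z hz => ?_
    rw [rankOne_mulVec, vnorm_smul]
    calc ‖vinner v z‖ * vnorm u ≤ (vnorm v * vnorm z) * vnorm u :=
          mul_le_mul_of_nonneg_right (vinner_norm_le v z) (vnorm_nonneg u)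
      _ ≤ (vnorm v * 1) * vnorm u := by
          apply mul_le_mul_of_nonneg_right _ (vnorm_nonneg u)
          exact mul_le_mul_of_nonneg_left hz (vnorm_nonneg v)
      _ = vnorm u * vnorm v := by ring
  · rcases eq_or_lt_of_le (vnorm_nonneg v) with h0 | h0
    · rw [← h0, mul_zero]; exact opNorm_nonneg _
    · set t : ℝ := (vnorm v)⁻¹ with ht
      have htpos : 0 < t := inv_pos.2 h0
      have hz1 : vnorm (fun j => ((t:ℝ):ℂ) * v j) = 1 := by
        rw [vnorm_smul]
        simp only [Complex.norm_real, Real.norm_eq_abs, abs_of_pos htpos, ht]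
        field_simp
        rw [abs_of_pos (one_div_pos.2 h0), mul_one_div_cancel h0.ne']
      have hmem := vnorm_mulVec_le_opNorm (rankOne u v) _ (le_of_eq hz1)
      rw [rankOne_mulVec] at hmem
      have hvv : vinner v (fun j => ((t:ℝ):ℂ) * v j) = ((t * vnormSq v : ℝ) : ℂ) := by
        rw [vinner_smul_right, vinner_self]; push_cast; ring
      rw [hvv, vnorm_smul] at hmem
      simp only [Complex.norm_real, Real.norm_eq_abs] at hmem
      have habs : |t * vnormSq v| = t * vnormSq v :=
        abs_of_nonneg (mul_nonneg (le_of_lt htpos) (vnormSq_nonneg v))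
      rw [habs] at hmem
      have hval : t * vnormSq v * vnorm u = vnorm u * vnorm v := by
        rw [ht, ← vnorm_sq]
        field_simp
      rw [hval] at hmem
      exact hmem

lemma vinner_conjTranspose {K N : ℕ} (Z : Matrix (Fin K) (Fin N) ℂ)
    (w : Fin K → ℂ) (z : Fin N → ℂ) :
    vinner (Z.conjTranspose.mulVec w) z = vinner w (Z.mulVec z) := by
  simp only [vinner, Matrix.mulVec, dotProduct, Matrix.conjTranspose_apply,
    Complex.star_def, map_sum, map_mul, Complex.conj_conj, Finset.mul_sum, Finset.sum_mul]
  rw [Finset.sum_comm]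
  exact Finset.sum_congr rfl fun j _ => Finset.sum_congr rfl fun k _ => by ring

lemma vnorm_conjTranspose_mulVec_le {K N : ℕ} (Z : Matrix (Fin K) (Fin N) ℂ)
    (w : Fin K → ℂ) : vnorm (Z.conjTranspose.mulVec w) ≤ opNorm Z * vnorm w := by
  set p := Z.conjTranspose.mulVec w with hp
  have key : (vnormSq p : ℂ) = vinner w (Z.mulVec p) := by
    rw [← vinner_self, hp, vinner_conjTranspose]
  have hb : vnormSq p ≤ vnorm w * (opNorm Z * vnorm p) := by
    have h1 : vnormSq p = ‖(vnormSq p : ℂ)‖ := by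
      rw [Complex.norm_real, Real.norm_eq_abs, abs_of_nonneg (vnormSq_nonneg p)]
    rw [h1, key]
    calc ‖vinner w (Z.mulVec p)‖ ≤ vnorm w * vnorm (Z.mulVec p) := vinner_norm_le _ _
      _ ≤ vnorm w * (opNorm Z * vnorm p) :=
          mul_le_mul_of_nonneg_left (vnorm_mulVec_le Z p) (vnorm_nonneg w)
  rcases eq_or_lt_of_le (vnorm_nonneg p) with h0 | h0
  · rw [← h0]
    exact mul_nonneg (opNorm_nonneg Z) (vnorm_nonneg w)
  · have h2 : vnorm p * vnorm p ≤ (opNorm Z * vnorm w) * vnorm p := by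
      calc vnorm p * vnorm p = vnormSq p := by rw [← vnorm_sq]; ring
        _ ≤ vnorm w * (opNorm Z * vnorm p) := hb
        _ = (opNorm Z * vnorm w) * vnorm p := by ring
    exact le_of_mul_le_mul_right h2 h0

lemma rankOne_rank_le {K N : ℕ} (u : Fin K → ℂ) (v : Fin N → ℂ) :
    (rankOne u v).rank ≤ 1 := by
  have heq : rankOne u v =
      (Matrix.replicateCol (Fin 1) u) * (Matrix.replicateRow (Fin 1) (fun j => conj (v j))) := by
    ext k j
    simp [rankOne, Matrix.mul_apply, Matrix.replicateCol_apply, Matrix.replicateRow_apply]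
  rw [heq]
  calc ((Matrix.replicateCol (Fin 1) u) * (Matrix.replicateRow (Fin 1) (fun j => conj (v j)))).rank
      ≤ (Matrix.replicateCol (Fin 1) u).rank := Matrix.rank_mul_le_left _ _
    _ ≤ 1 := by
        have := Matrix.rank_le_card_width (Matrix.replicateCol (Fin 1) u)
        simpa using this

lemma vnormSq_smul {n : ℕ} (t : ℂ) (v : Fin n → ℂ) :
    vnormSq (fun k => t * v k) = ‖t‖^2 * vnormSq v := by
  simp [vnormSq, Finset.mul_sum, mul_pow]

lemma vinner_smul_left {n : ℕ} (t : ℂ) (u v : Fin n → ℂ) :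
    vinner (fun k => t * u k) v = conj t * vinner u v := by
  simp only [vinner, map_mul, Finset.mul_sum]
  exact Finset.sum_congr rfl fun j _ => by ring

lemma vinner_conj_symm {n : ℕ} (u v : Fin n → ℂ) : vinner u v = conj (vinner v u) := by
  simp only [vinner, map_sum, map_mul, Complex.conj_conj]
  exact Finset.sum_congr rfl fun j _ => by ring

lemma aux_sqrt2 : (1.25:ℝ) ≤ Real.sqrt 2 := by
  nlinarith [Real.sq_sqrt (by norm_num : (0:ℝ) ≤ 2), Real.sqrt_nonneg 2]

lemma aux_contra (A T R D : ℝ) (hApos : 0 < A) (hT0 : 0 ≤ T) (hT1 : T < 1)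
    (hRle : R ≤ A * (T * A))
    (hineq : A^2 + D - 2*R ≤ T^2*A^2 + D - 2*(T*R)) : False := by
  have h1 := mul_le_mul_of_nonneg_left hRle (by linarith : (0:ℝ) ≤ 2*(1-T))
  have h2 : 0 < (A*(1-T)) * (A*(1-T)) :=
    mul_pos (mul_pos hApos (by linarith)) (mul_pos hApos (by linarith))
  nlinarith [h1, h2]

lemma aux_last (E S Kp R2 : ℝ) (hE : 0 < E) (hS : 0 < S) (hK : 0 < Kp)
    (hR : 1.25 ≤ R2) : 5*E*(5*S*Kp) ≤ 2*E*(10*(R2*S)*Kp) := by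
  nlinarith [mul_pos (mul_pos hE hS) hK]


set_option maxHeartbeats 2000000 in
/-- guarantees for the spectral initialization. -/
theorem statement18
    {K N L s : ℕ} (hK : 0 < K) (hN : 0 < N) (hL : 0 < L) (hs : 1 ≤ s)
    (b : Fin L → Fin K → ℂ) (hb : BtBeqI b)
    (a : Fin s → Fin L → Fin N → ℂ)
    (h0 : Fin s → Fin K → ℂ) (x0 : Fin s → Fin N → ℂ)
    (d0 : Fin s → ℝ) (hd0 : ∀ i, 0 < d0 i)
    (hh0 : ∀ i, vnorm (h0 i) = Real.sqrt (d0 i))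
    (hx0 : ∀ i, vnorm (x0 i) = Real.sqrt (d0 i))
    (e : Fin L → ℂ)
    (μ ε ξ : ℝ) (hμ : 0 < μ) (hμh : muhLe b h0 μ)
    (hκ : 1 ≤ kappa d0)
    (hε : 0 < ε) (hε15 : ε ≤ 1 / 15)
    (hξ : ξ = ε / (10 * Real.sqrt (2 * (s : ℝ)) * kappa d0))
    (hAy : ∀ i, opNorm (calAdj b (a i) (yvec b a h0 x0 e) - rankOne (h0 i) (x0 i))
        ≤ ξ * d0 i)
    (di : Fin s → ℝ)
    (hdi : ∀ i, di i = opNorm (calAdj b (a i) (yvec b a h0 x0 e)))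
    (hhat : Fin s → Fin K → ℂ) (xhat : Fin s → Fin N → ℂ)
    (hhatu : ∀ i, vnorm (hhat i) = 1) (xhatu : ∀ i, vnorm (xhat i) = 1)
    (hbest : ∀ i, ∀ Z : Matrix (Fin K) (Fin N) ℂ, Z.rank ≤ 1 →
      opNorm (calAdj b (a i) (yvec b a h0 x0 e) - di i • rankOne (hhat i) (xhat i))
        ≤ opNorm (calAdj b (a i) (yvec b a h0 x0 e) - Z))
    (u0 : Fin s → Fin K → ℂ)
    (hu0Q : ∀ i l, Real.sqrt L * ‖vinner (b l) (u0 i)‖ ≤ 2 * Real.sqrt (di i) * μ)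
    (hu0min : ∀ i, ∀ z : Fin K → ℂ,
      (∀ l, Real.sqrt L * ‖vinner (b l) z‖ ≤ 2 * Real.sqrt (di i) * μ) →
      vnorm (fun k => u0 i k - (Real.sqrt (di i) : ℂ) * hhat i k)
        ≤ vnorm (fun k => z k - (Real.sqrt (di i) : ℂ) * hhat i k))
    (v0 : Fin s → Fin N → ℂ)
    (hv0 : ∀ i j, v0 i j = (Real.sqrt (di i) : ℂ) * xhat i j) :
    ∀ i,
      (0.9 * d0 i ≤ di i ∧ di i ≤ 1.1 * d0 i)
      ∧ vnorm (u0 i) ≤ 2 / Real.sqrt 3 * Real.sqrt (d0 i)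
      ∧ vnorm (v0 i) ≤ 2 / Real.sqrt 3 * Real.sqrt (d0 i)
      ∧ (∀ l, Real.sqrt L * ‖vinner (b l) (u0 i)‖
          ≤ 4 / Real.sqrt 3 * Real.sqrt (d0 i) * μ)
      ∧ frob (rankOne (u0 i) (v0 i) - rankOne (h0 i) (x0 i)) ≤ 5 * ξ * d0 i
      ∧ 5 * ξ * d0 i ≤ 2 * ε / (5 * Real.sqrt s * kappa d0) * d0 i := by
  intro i
  have hd0i : 0 < d0 i := hd0 i
  have hd0c : ((d0 i : ℝ) : ℂ) ≠ 0 := by exact_mod_cast (ne_of_gt hd0i)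
  -- numeric facts about ξ
  have hs1 : (1:ℝ) ≤ Real.sqrt s := by
    rw [show (1:ℝ) = Real.sqrt 1 by simp]
    exact Real.sqrt_le_sqrt (by exact_mod_cast hs)
  have hsqrt2 : (1.25:ℝ) ≤ Real.sqrt 2 := aux_sqrt2
  have hsq2s : Real.sqrt (2 * (s:ℝ)) = Real.sqrt 2 * Real.sqrt s :=
    Real.sqrt_mul (by norm_num) _
  have hκ0 : (0:ℝ) < kappa d0 := lt_of_lt_of_le one_pos hκ
  have hDen : (12.5:ℝ) ≤ 10 * Real.sqrt (2 * (s:ℝ)) * kappa d0 := by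
    rw [hsq2s]
    have h1 : (1.25:ℝ) * 1 ≤ Real.sqrt 2 * Real.sqrt s :=
      mul_le_mul hsqrt2 hs1 (by norm_num) (Real.sqrt_nonneg 2)
    have h2 : (1.25:ℝ) * 1 * 1 ≤ (Real.sqrt 2 * Real.sqrt s) * kappa d0 :=
      mul_le_mul (by linarith) hκ (by norm_num) (by positivity)
    linarith
  have hDenpos : (0:ℝ) < 10 * Real.sqrt (2 * (s:ℝ)) * kappa d0 := by linarith
  have hξpos : 0 < ξ := by rw [hξ]; exact div_pos hε hDenpos
  have hξ10 : ξ ≤ 1/10 := by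
    rw [hξ, div_le_iff₀ hDenpos]
    linarith
  -- part 1
  set M := calAdj b (a i) (yvec b a h0 x0 e) with hMdef
  set H := rankOne (h0 i) (x0 i) with hHdef
  have hopH : opNorm H = d0 i := by
    rw [hHdef, opNorm_rankOne, hh0 i, hx0 i, Real.mul_self_sqrt hd0i.le]
  have hMH : opNorm (M - H) ≤ ξ * d0 i := hAy i
  have hdiM : di i = opNorm M := hdi i
  have hup : di i ≤ (1 + ξ) * d0 i := by
    have e1 : H + (M - H) = M := by abel
    rw [hdiM]
    calc opNorm M = opNorm (H + (M - H)) := by rw [e1]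
      _ ≤ opNorm H + opNorm (M - H) := opNorm_add_le _ _
      _ ≤ d0 i + ξ * d0 i := by rw [hopH]; linarith
      _ = (1 + ξ) * d0 i := by ring
  have hlow : (1 - ξ) * d0 i ≤ di i := by
    have e1 : M + (H - M) = H := by abel
    have e2 : H - M = -(M - H) := by abel
    have h1 : opNorm H ≤ opNorm M + opNorm (M - H) := by
      calc opNorm H = opNorm (M + (H - M)) := by rw [e1]
        _ ≤ opNorm M + opNorm (H - M) := opNorm_add_le _ _
        _ = opNorm M + opNorm (M - H) := by rw [e2, opNorm_neg]
    rw [hopH] at h1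
    rw [hdiM]
    linarith
  have hxd0 : ξ * d0 i ≤ (1/10) * d0 i := mul_le_mul_of_nonneg_right hξ10 hd0i.le
  have hdi09 : 0.9 * d0 i ≤ di i := by nlinarith [hlow, hxd0]
  have hdi11 : di i ≤ 1.1 * d0 i := by nlinarith [hup, hxd0]
  have hdipos : 0 < di i := by nlinarith [hdi09]
  have hsdi : 0 < Real.sqrt (di i) := Real.sqrt_pos.2 hdipos
  have hsdisq : Real.sqrt (di i) * Real.sqrt (di i) = di i := Real.mul_self_sqrt hdipos.le
  have h3pos : (0:ℝ) < Real.sqrt 3 := Real.sqrt_pos.2 (by norm_num)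
  have h23sq : ((2:ℝ)/Real.sqrt 3)^2 = 4/3 := by
    rw [div_pow, Real.sq_sqrt (by norm_num : (0:ℝ) ≤ 3)]; norm_num
  have h23 : Real.sqrt (4/3) = 2 / Real.sqrt 3 := by
    rw [← h23sq, Real.sqrt_sq (by positivity)]
  have hsqdi : Real.sqrt (di i) ≤ 2 / Real.sqrt 3 * Real.sqrt (d0 i) := by
    have h43 : di i ≤ (4/3) * d0 i := by linarith
    calc Real.sqrt (di i) ≤ Real.sqrt ((4/3) * d0 i) := Real.sqrt_le_sqrt h43
      _ = 2 / Real.sqrt 3 * Real.sqrt (d0 i) := by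
          rw [Real.sqrt_mul (by norm_num : (0:ℝ) ≤ 4/3), h23]
  have hxh1 : vnormSq (xhat i) = 1 := by rw [← vnorm_sq, xhatu i]; norm_num
  have hh0sq : vnormSq (h0 i) = d0 i := by
    rw [← vnorm_sq, hh0 i, Real.sq_sqrt hd0i.le]
  -- part 2 : ‖u0‖ ≤ √di
  have hu0n : vnorm (u0 i) ≤ Real.sqrt (di i) := by
    by_contra hcon
    push_neg at hcon
    set A := vnorm (u0 i) with hA
    have hApos : 0 < A := lt_of_le_of_lt (Real.sqrt_nonneg _) hcon
    set T : ℝ := Real.sqrt (di i) / A with hT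
    have hT0 : 0 ≤ T := div_nonneg (Real.sqrt_nonneg _) hApos.le
    have hT1 : T < 1 := (div_lt_one hApos).2 hcon
    have hTA : T * A = Real.sqrt (di i) := by rw [hT]; field_simp
    have hzQ : ∀ l, Real.sqrt L * ‖vinner (b l) (fun k => ((T:ℝ):ℂ) * u0 i k)‖
        ≤ 2 * Real.sqrt (di i) * μ := by
      intro l
      rw [vinner_smul_right, norm_mul, Complex.norm_real, Real.norm_eq_abs,
        abs_of_nonneg hT0]
      calc Real.sqrt L * (T * ‖vinner (b l) (u0 i)‖)
          = T * (Real.sqrt L * ‖vinner (b l) (u0 i)‖) := by ring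
        _ ≤ 1 * (2 * Real.sqrt (di i) * μ) :=
            mul_le_mul hT1.le (hu0Q i l) (by positivity) (by norm_num)
        _ = 2 * Real.sqrt (di i) * μ := one_mul _
    have hmin := hu0min i _ hzQ
    have hminSq : vnormSq (fun k => u0 i k - (Real.sqrt (di i):ℂ) * hhat i k)
        ≤ vnormSq (fun k => ((T:ℝ):ℂ) * u0 i k - (Real.sqrt (di i):ℂ) * hhat i k) := by
      rw [← vnorm_sq, ← vnorm_sq]
      exact pow_le_pow_left₀ (vnorm_nonneg _) hmin 2
    rw [vnormSq_sub, vnormSq_sub] at hminSq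
    set wh : Fin K → ℂ := fun k => (Real.sqrt (di i):ℂ) * hhat i k with hwh
    have hWn : vnormSq wh = di i := by
      rw [hwh, vnormSq_smul]
      rw [show vnormSq (hhat i) = 1 by rw [← vnorm_sq, hhatu i]; norm_num]
      rw [Complex.norm_real, Real.norm_eq_abs, abs_of_nonneg (Real.sqrt_nonneg _)]
      rw [mul_one, Real.sq_sqrt hdipos.le]
    have hTu : vnormSq (fun k => ((T:ℝ):ℂ) * u0 i k) = T^2 * A^2 := by
      rw [vnormSq_smul, Complex.norm_real, Real.norm_eq_abs, abs_of_nonneg hT0,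
        ← vnorm_sq]
    have hTin : (vinner (fun k => ((T:ℝ):ℂ) * u0 i k) wh).re
        = T * (vinner (u0 i) wh).re := by
      rw [vinner_smul_left, Complex.conj_ofReal, Complex.re_ofReal_mul]
    have hAsq : vnormSq (u0 i) = A^2 := (vnorm_sq _).symm
    set R : ℝ := (vinner (u0 i) wh).re with hR
    have hRle : R ≤ A * Real.sqrt (di i) := by
      calc R ≤ ‖vinner (u0 i) wh‖ := Complex.re_le_norm _
        _ ≤ vnorm (u0 i) * vnorm wh := vinner_norm_le _ _
        _ = A * Real.sqrt (di i) := by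
            rw [← hA]
            congr 1
            rw [hwh, vnorm_smul, hhatu i, mul_one, Complex.norm_real, Real.norm_eq_abs,
              abs_of_nonneg (Real.sqrt_nonneg _)]
    rw [hAsq, hTu, hTin, hWn] at hminSq
    rw [← hTA] at hRle
    exact aux_contra A T R (di i) hApos hT0 hT1 hRle hminSq
  -- the best rank-one approximation matrix
  set Dm := di i • rankOne (hhat i) (xhat i) with hDmdef
  have hbest' : opNorm (M - Dm) ≤ ξ * d0 i :=
    le_trans (hbest i H (rankOne_rank_le _ _)) hMH
  have hD2 : opNorm (Dm - H) ≤ 2 * ξ * d0 i := by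
    have e1 : -(M - Dm) + (M - H) = Dm - H := by abel
    calc opNorm (Dm - H) = opNorm (-(M - Dm) + (M - H)) := by rw [e1]
      _ ≤ opNorm (-(M - Dm)) + opNorm (M - H) := opNorm_add_le _ _
      _ = opNorm (M - Dm) + opNorm (M - H) := by rw [opNorm_neg]
      _ ≤ ξ * d0 i + ξ * d0 i := add_le_add hbest' hMH
      _ = 2 * ξ * d0 i := by ring
  set c : ℂ := vinner (x0 i) (xhat i) with hc
  set c1 : ℂ := vinner (h0 i) (hhat i) with hc1
  set w : Fin K → ℂ := fun k => ((di i : ℝ) : ℂ) * hhat i k - c * h0 i k with hwdef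
  have hw_eq : (Dm - H).mulVec (xhat i) = w := by
    funext k
    have h1 : (Dm - H).mulVec (xhat i) k = Dm.mulVec (xhat i) k - H.mulVec (xhat i) k := by
      rw [Matrix.sub_mulVec]; rfl
    have h2 : Dm.mulVec (xhat i) k
        = ((di i : ℝ) : ℂ) * (vinner (xhat i) (xhat i) * hhat i k) := by
      rw [hDmdef, Matrix.smul_mulVec]
      simp [rankOne_mulVec, Complex.real_smul]
    have h3 : H.mulVec (xhat i) k = vinner (x0 i) (xhat i) * h0 i k := by
      rw [hHdef]; simp [rankOne_mulVec]
    rw [h1, h2, h3, vinner_self, hxh1]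
    simp [hwdef, hc]
  have hwnorm : vnorm w ≤ 2 * ξ * d0 i := by
    rw [← hw_eq]
    calc vnorm ((Dm - H).mulVec (xhat i)) ≤ opNorm (Dm - H) * vnorm (xhat i) :=
          vnorm_mulVec_le _ _
      _ = opNorm (Dm - H) := by rw [xhatu i, mul_one]
      _ ≤ 2 * ξ * d0 i := hD2
  set q' : Fin N → ℂ :=
    fun j => ((di i : ℝ) : ℂ) * conj c1 * xhat i j - ((d0 i : ℝ) : ℂ) * x0 i j with hq'def
  have hq'_eq : (Dm - H).conjTranspose.mulVec (h0 i) = q' := by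
    funext j
    have h1 : (Dm - H).conjTranspose.mulVec (h0 i) j
        = ∑ k, conj ((Dm - H) k j) * h0 i k := by
      simp [Matrix.mulVec, dotProduct, Matrix.conjTranspose_apply, Complex.star_def]
    have h2 : ∀ k, conj ((Dm - H) k j) * h0 i k
        = ((di i : ℝ) : ℂ) * (conj (hhat i k) * h0 i k) * xhat i j
          - (conj (h0 i k) * h0 i k) * x0 i j := by
      intro k
      have he : (Dm - H) k j = ((di i : ℝ) : ℂ) * (hhat i k * conj (xhat i j))
          - h0 i k * conj (x0 i j) := by
        rw [hDmdef, hHdef]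
        simp [Matrix.sub_apply, rankOne, Complex.real_smul]
      rw [he]
      simp only [map_sub, map_mul, Complex.conj_ofReal, Complex.conj_conj]
      ring
    rw [h1]
    simp only [h2]
    rw [Finset.sum_sub_distrib, ← Finset.sum_mul, ← Finset.sum_mul, ← Finset.mul_sum]
    have h3 : (∑ k, conj (hhat i k) * h0 i k) = conj c1 := by
      rw [hc1]
      simp only [vinner, map_sum, map_mul, Complex.conj_conj]
      exact Finset.sum_congr rfl fun k _ => by ring
    have h4 : (∑ k, conj (h0 i k) * h0 i k) = ((d0 i : ℝ) : ℂ) := by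
      have h5 : (∑ k, conj (h0 i k) * h0 i k) = vinner (h0 i) (h0 i) := rfl
      rw [h5, vinner_self, hh0sq]
    rw [h3, h4, hq'def]
  have hq'norm : vnorm q' ≤ 2 * ξ * d0 i * Real.sqrt (d0 i) := by
    rw [← hq'_eq]
    calc vnorm ((Dm - H).conjTranspose.mulVec (h0 i))
        ≤ opNorm (Dm - H) * vnorm (h0 i) := vnorm_conjTranspose_mulVec_le _ _
      _ ≤ 2 * ξ * d0 i * Real.sqrt (d0 i) := by
          rw [hh0 i]
          exact mul_le_mul_of_nonneg_right hD2 (Real.sqrt_nonneg _)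
  set βc : ℂ := vinner (h0 i) w / ((d0 i : ℝ) : ℂ) with hβ
  set wp : Fin K → ℂ := fun k => w k - βc * h0 i k with hwp
  have hβval : vinner (h0 i) w = ((di i:ℝ):ℂ) * c1 - c * ((d0 i:ℝ):ℂ) := by
    have h5 : vinner (h0 i) w
        = ((di i:ℝ):ℂ) * vinner (h0 i) (hhat i) - c * vinner (h0 i) (h0 i) := by
      simp only [vinner, hwdef, mul_sub, Finset.sum_sub_distrib, Finset.mul_sum]
      congr 1 <;> exact Finset.sum_congr rfl fun k _ => by ring
    rw [h5, vinner_self, hh0sq, hc1]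
  have horth : vinner (h0 i) wp = 0 := by
    have h5 : vinner (h0 i) wp = vinner (h0 i) w - βc * vinner (h0 i) (h0 i) := by
      simp only [vinner, hwp, mul_sub, Finset.sum_sub_distrib, Finset.mul_sum]
      congr 1
      exact Finset.sum_congr rfl fun k _ => by ring
    rw [h5, vinner_self, hh0sq, hβ]
    field_simp
    ring
  set q : Fin N → ℂ := fun j => conj βc * xhat i j + conj c * xhat i j - x0 i j with hq
  have hqq' : q = fun j => (((d0 i:ℝ):ℂ))⁻¹ * q' j := by
    funext j
    simp only [hq, hq'def, hβ, hβval]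
    simp only [map_div₀, map_sub, map_mul, Complex.conj_ofReal]
    field_simp
    ring
  have hqnorm : vnorm q ≤ 2 * ξ * Real.sqrt (d0 i) := by
    rw [hqq', vnorm_smul]
    have h5 : ‖(((d0 i:ℝ):ℂ))⁻¹‖ = (d0 i)⁻¹ := by
      rw [norm_inv, Complex.norm_real, Real.norm_eq_abs, abs_of_pos hd0i]
    rw [h5]
    calc (d0 i)⁻¹ * vnorm q' ≤ (d0 i)⁻¹ * (2*ξ*d0 i*Real.sqrt (d0 i)) :=
          mul_le_mul_of_nonneg_left hq'norm (by positivity)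
      _ = 2 * ξ * Real.sqrt (d0 i) := by field_simp
  have hdecomp : Dm - H = rankOne (h0 i) q + rankOne wp (xhat i) := by
    ext k j
    simp only [Matrix.sub_apply, Matrix.add_apply, hDmdef, hHdef, rankOne, Matrix.of_apply,
      Matrix.smul_apply, Complex.real_smul, hq, hwp, hwdef, map_sub, map_add, map_mul,
      Complex.conj_conj]
    ring
  have hfrobD : frobSq (Dm - H) ≤ 8 * ξ^2 * (d0 i)^2 := by
    rw [hdecomp, frobSq_add_of_orth _ _ (by rw [finner_rankOne, horth, zero_mul]),
      frobSq_rankOne, frobSq_rankOne, hh0sq, hxh1]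
    have h1 : vnormSq q ≤ 4 * ξ^2 * d0 i := by
      rw [← vnorm_sq]
      calc vnorm q ^2 ≤ (2*ξ*Real.sqrt (d0 i))^2 :=
            pow_le_pow_left₀ (vnorm_nonneg _) hqnorm 2
        _ = 4*ξ^2*(Real.sqrt (d0 i))^2 := by ring
        _ = 4*ξ^2*d0 i := by rw [Real.sq_sqrt hd0i.le]
    have h2 : vnormSq wp ≤ 4 * ξ^2 * (d0 i)^2 := by
      have hw' : w = fun k => wp k + βc * h0 i k := by
        funext k; simp only [hwp]; ring
      have hsum : vnormSq w = vnormSq wp + vnormSq (fun k => βc * h0 i k)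
          + 2 * (vinner wp (fun k => βc * h0 i k)).re := by
        conv_lhs => rw [hw']
        exact vnormSq_add _ _
      have hz : (vinner wp (fun k => βc * h0 i k)).re = 0 := by
        rw [vinner_smul_right]
        have h6 : vinner wp (h0 i) = 0 := by
          rw [vinner_conj_symm, horth, map_zero]
        rw [h6, mul_zero]
        rfl
      have hle : vnormSq wp ≤ vnormSq w := by
        rw [hsum, hz]
        have := vnormSq_nonneg (fun k => βc * h0 i k)
        linarith
      calc vnormSq wp ≤ vnormSq w := hle
        _ ≤ (2*ξ*d0 i)^2 := by
            rw [← vnorm_sq]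
            exact pow_le_pow_left₀ (vnorm_nonneg _) hwnorm 2
        _ = 4*ξ^2*(d0 i)^2 := by ring
    have h3 : d0 i * vnormSq q ≤ d0 i * (4*ξ^2*d0 i) :=
      mul_le_mul_of_nonneg_left h1 hd0i.le
    nlinarith [h3, h2]
  have hfrobD' : frob (Dm - H) ≤ 3 * ξ * d0 i := by
    have h9 : frobSq (Dm - H) ≤ (3*ξ*d0 i)^2 := by
      nlinarith [hfrobD, sq_nonneg (ξ * d0 i)]
    calc frob (Dm - H) = Real.sqrt (frobSq (Dm - H)) := rfl
      _ ≤ Real.sqrt ((3*ξ*d0 i)^2) := Real.sqrt_le_sqrt h9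
      _ = 3*ξ*d0 i := Real.sqrt_sq (by positivity)
  -- the projection candidate p
  set p : Fin K → ℂ := fun k => (c / ((Real.sqrt (di i) : ℝ) : ℂ)) * h0 i k with hp
  have hcnorm : ‖c‖ ≤ Real.sqrt (d0 i) := by
    rw [hc]
    calc ‖vinner (x0 i) (xhat i)‖ ≤ vnorm (x0 i) * vnorm (xhat i) := vinner_norm_le _ _
      _ = Real.sqrt (d0 i) := by rw [hx0 i, xhatu i, mul_one]
  have hpQ : ∀ l, Real.sqrt L * ‖vinner (b l) p‖ ≤ 2 * Real.sqrt (di i) * μ := by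
    intro l
    simp only [hp]
    rw [vinner_smul_right, norm_mul]
    have ht : ‖c / ((Real.sqrt (di i) : ℝ) : ℂ)‖ = ‖c‖ / Real.sqrt (di i) := by
      rw [norm_div, Complex.norm_real, Real.norm_eq_abs, abs_of_pos hsdi]
    rw [ht]
    have hb1 : Real.sqrt L * ‖vinner (b l) (h0 i)‖ ≤ μ * Real.sqrt (d0 i) := by
      have h7 := hμh i l
      rwa [hh0 i] at h7
    calc Real.sqrt L * (‖c‖ / Real.sqrt (di i) * ‖vinner (b l) (h0 i)‖)
        = ‖c‖ / Real.sqrt (di i) * (Real.sqrt L * ‖vinner (b l) (h0 i)‖) := by ring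
      _ ≤ Real.sqrt (d0 i) / Real.sqrt (di i) * (μ * Real.sqrt (d0 i)) := by
          apply mul_le_mul ((div_le_div_iff_of_pos_right hsdi).2 hcnorm) hb1 (by positivity) (by positivity)
      _ = μ * (d0 i / Real.sqrt (di i)) := by
          rw [div_mul_eq_mul_div]
          rw [show Real.sqrt (d0 i) * (μ * Real.sqrt (d0 i))
              = μ * (Real.sqrt (d0 i) * Real.sqrt (d0 i)) from by ring]
          rw [Real.mul_self_sqrt hd0i.le, mul_div_assoc]
      _ ≤ 2 * Real.sqrt (di i) * μ := by
          rw [show 2 * Real.sqrt (di i) * μ = μ * (2 * Real.sqrt (di i)) by ring]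
          apply mul_le_mul_of_nonneg_left _ hμ.le
          rw [div_le_iff₀ hsdi]
          rw [show 2 * Real.sqrt (di i) * Real.sqrt (di i) = 2 * di i from by
            rw [mul_assoc, hsdisq]]
          linarith
  have hS0 : ((Real.sqrt (di i) : ℝ) : ℂ) ≠ 0 := by
    exact_mod_cast (ne_of_gt hsdi)
  have hSS : ((Real.sqrt (di i) : ℝ) : ℂ) * ((Real.sqrt (di i) : ℝ) : ℂ) = ((di i : ℝ) : ℂ) := by
    exact_mod_cast congrArg Complex.ofReal hsdisq
  have hdist : vnorm (fun k => u0 i k - (Real.sqrt (di i):ℂ) * hhat i k)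
      ≤ (Real.sqrt (di i))⁻¹ * (2 * ξ * d0 i) := by
    have h1 := hu0min i p hpQ
    have hpe : (fun k => p k - (Real.sqrt (di i):ℂ) * hhat i k)
        = fun k => (-((((Real.sqrt (di i))⁻¹ : ℝ)) : ℂ)) * w k := by
      funext k
      simp only [hp, hwdef]
      rw [show ((di i : ℝ) : ℂ) = ((Real.sqrt (di i) : ℝ) : ℂ) * ((Real.sqrt (di i) : ℝ) : ℂ) from hSS.symm]
      push_cast
      field_simp
      ring
    rw [hpe] at h1
    rw [vnorm_smul] at h1
    have hn : ‖(-((((Real.sqrt (di i))⁻¹ : ℝ)) : ℂ))‖ = (Real.sqrt (di i))⁻¹ := by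
      rw [norm_neg, Complex.norm_real, Real.norm_eq_abs, abs_of_pos (by positivity)]
    rw [hn] at h1
    calc vnorm (fun k => u0 i k - (Real.sqrt (di i):ℂ) * hhat i k)
        ≤ (Real.sqrt (di i))⁻¹ * vnorm w := h1
      _ ≤ (Real.sqrt (di i))⁻¹ * (2 * ξ * d0 i) :=
          mul_le_mul_of_nonneg_left hwnorm (by positivity)
  have hfrob1 : frob (rankOne (u0 i) (v0 i) - Dm) ≤ 2 * ξ * d0 i := by
    have hid : rankOne (u0 i) (v0 i) - Dm
        = rankOne (fun k => u0 i k - (Real.sqrt (di i):ℂ) * hhat i k)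
                  (fun j => (Real.sqrt (di i):ℂ) * xhat i j) := by
      ext k j
      simp only [Matrix.sub_apply, rankOne, Matrix.of_apply, hDmdef, Matrix.smul_apply,
        Complex.real_smul, hv0 i j, map_mul, map_sub, Complex.conj_ofReal]
      rw [show ((di i : ℝ) : ℂ) = ((Real.sqrt (di i) : ℝ) : ℂ) * ((Real.sqrt (di i) : ℝ) : ℂ) from hSS.symm]
      ring
    rw [hid, frob_rankOne]
    have hv : vnorm (fun j => (Real.sqrt (di i):ℂ) * xhat i j) = Real.sqrt (di i) := by
      rw [vnorm_smul, xhatu i, mul_one, Complex.norm_real, Real.norm_eq_abs,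
        abs_of_nonneg (Real.sqrt_nonneg _)]
    rw [hv]
    calc vnorm (fun k => u0 i k - (Real.sqrt (di i):ℂ) * hhat i k) * Real.sqrt (di i)
        ≤ ((Real.sqrt (di i))⁻¹ * (2*ξ*d0 i)) * Real.sqrt (di i) :=
          mul_le_mul_of_nonneg_right hdist (Real.sqrt_nonneg _)
      _ = 2*ξ*d0 i := by field_simp
  have hfrob5 : frob (rankOne (u0 i) (v0 i) - H) ≤ 5 * ξ * d0 i := by
    calc frob (rankOne (u0 i) (v0 i) - H)
        ≤ frob (rankOne (u0 i) (v0 i) - Dm) + frob (Dm - H) := frob_sub_add _ _ _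
      _ ≤ 2*ξ*d0 i + 3*ξ*d0 i := add_le_add hfrob1 hfrobD'
      _ = 5*ξ*d0 i := by ring
  have hspos : (0:ℝ) < Real.sqrt s := lt_of_lt_of_le one_pos hs1
  have hlast : 5 * ξ * d0 i ≤ 2 * ε / (5 * Real.sqrt s * kappa d0) * d0 i := by
    have key : 5 * ξ ≤ 2 * ε / (5 * Real.sqrt s * kappa d0) := by
      rw [hξ, hsq2s, mul_div_assoc']
      rw [div_le_div_iff₀ (by positivity) (by positivity)]
      exact aux_last ε (Real.sqrt s) (kappa d0) (Real.sqrt 2) hε hspos hκ0 hsqrt2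
    exact mul_le_mul_of_nonneg_right key hd0i.le
  refine ⟨⟨hdi09, hdi11⟩, le_trans hu0n hsqdi, ?_, ?_, hfrob5, hlast⟩
  · have hv0i : v0 i = fun j => (Real.sqrt (di i):ℂ) * xhat i j := funext (hv0 i)
    rw [hv0i]
    have hv : vnorm (fun j => (Real.sqrt (di i):ℂ) * xhat i j) = Real.sqrt (di i) := by
      rw [vnorm_smul, xhatu i, mul_one, Complex.norm_real, Real.norm_eq_abs,
        abs_of_nonneg (Real.sqrt_nonneg _)]
    rw [hv]
    exact le_trans (le_refl _) hsqdi
  · intro l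
    calc Real.sqrt L * ‖vinner (b l) (u0 i)‖ ≤ 2 * Real.sqrt (di i) * μ := hu0Q i l
      _ ≤ 4 / Real.sqrt 3 * Real.sqrt (d0 i) * μ := by
          apply mul_le_mul_of_nonneg_right _ hμ.le
          calc 2 * Real.sqrt (di i) ≤ 2 * (2 / Real.sqrt 3 * Real.sqrt (d0 i)) :=
                mul_le_mul_of_nonneg_left hsqdi (by norm_num)
            _ = 4 / Real.sqrt 3 * Real.sqrt (d0 i) := by ring

end RGD
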